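/- Let I ⊆ ℝ be an open interval and let p, S, L, H : I → Matₙ(ℝ) be such that: S is differentiable and symmetric-valued with S'(u) + S(u)² + p(u) = 0 on I; L is differentiable with L'(u) = S(u)·L(u) and L(u) invertible on I; H is differentiable with L(u)·H'(u)·L(u)ᵀ = 1 (the identity matrix) on I; and L(u)·H(u)·L(u)ᵀ is invertible on I. Then J(u) := L(u)·H(u) and T(u) := S(u) + ( L(u)·H(u)·L(u)ᵀ )⁻¹ satisfy T'(u) + T(u)² + p(u) = 0 and J'(u) = T(u)·J(u) on I. -/

import Mathlib

open Matrix Set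

attribute [local instance] Matrix.frobeniusNormedAddCommGroup Matrix.frobeniusNormedSpace

attribute [local instance] Matrix.frobeniusNormedRing Matrix.frobeniusNormedAlgebra

/-- Derivative of the pointwise transpose of a matrix-valued function. -/
lemma hasDerivAt_transpose_aux {n : ℕ} {f : ℝ → Matrix (Fin n) (Fin n) ℝ}
    {f' : Matrix (Fin n) (Fin n) ℝ} {u : ℝ} (hf : HasDerivAt f f' u) :
    HasDerivAt (fun w => (f w)ᵀ) f'ᵀ u := by
  let e : Matrix (Fin n) (Fin n) ℝ →L[ℝ] Matrix (Fin n) (Fin n) ℝ :=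
    LinearMap.toContinuousLinearMap
      ((Matrix.transposeLinearEquiv (Fin n) (Fin n) ℝ ℝ).toLinearMap)
  exact e.hasFDerivAt.comp_hasDerivAt u hf

/-- Derivative of the pointwise inverse of a matrix-valued function at a point where the
value is invertible. -/
lemma hasDerivAt_matrix_inv_aux {n : ℕ} {f : ℝ → Matrix (Fin n) (Fin n) ℝ}
    {f' : Matrix (Fin n) (Fin n) ℝ} {u : ℝ} (hf : HasDerivAt f f' u)
    (hu : IsUnit (f u)) :
    HasDerivAt (fun w => (f w)⁻¹) (-((f u)⁻¹ * f' * (f u)⁻¹)) u := by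
  lift f u to (Matrix (Fin n) (Fin n) ℝ)ˣ using hu with x hx
  have h := (hasFDerivAt_ringInverse (𝕜 := ℝ) x)
  rw [hx] at h
  have h2 := h.comp_hasDerivAt u hf
  simp only [Function.comp_def, ← Matrix.nonsing_inv_eq_ringInverse] at h2
  refine h2.congr_deriv ?_
  · simp [ContinuousLinearMap.neg_apply, ContinuousLinearMap.mulLeftRight_apply,
      Matrix.coe_units_inv, Matrix.mul_assoc]

/-- Let `(S, L)` be a solution of the Sachs system (`S' + S² + p = 0`,
`S` symmetric, `L' = S L`, `L` invertible) on an open interval `(a,b)`, and let `H` satisfy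
`L H' Lᵀ = 1`, with `L H Lᵀ` invertible.  Then `J = L H` and `T = S + (L H Lᵀ)⁻¹` satisfy
`T' + T² + p = 0` and `J' = T J`. -/
theorem new_sachs_solution_from_primitive {n : ℕ} (a b : ℝ)
    (p S L H H' : ℝ → Matrix (Fin n) (Fin n) ℝ)
    (hSsym : ∀ u ∈ Set.Ioo a b, (S u)ᵀ = S u)
    (hSachs : ∀ u ∈ Set.Ioo a b, HasDerivAt S (-(S u * S u + p u)) u)
    (hL : ∀ u ∈ Set.Ioo a b, HasDerivAt L (S u * L u) u)
    (hLinv : ∀ u ∈ Set.Ioo a b, IsUnit (L u))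
    (hH : ∀ u ∈ Set.Ioo a b, HasDerivAt H (H' u) u)
    (hH' : ∀ u ∈ Set.Ioo a b, L u * H' u * (L u)ᵀ = 1)
    (hLHL : ∀ u ∈ Set.Ioo a b, IsUnit (L u * H u * (L u)ᵀ)) :
    ∀ u ∈ Set.Ioo a b,
      HasDerivAt (fun w => S w + (L w * H w * (L w)ᵀ)⁻¹)
        (-((S u + (L u * H u * (L u)ᵀ)⁻¹) * (S u + (L u * H u * (L u)ᵀ)⁻¹) + p u)) u ∧
      HasDerivAt (fun w => L w * H w)
        ((S u + (L u * H u * (L u)ᵀ)⁻¹) * (L u * H u)) u := by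
  intro u hu
  set M : Matrix (Fin n) (Fin n) ℝ := L u * H u * (L u)ᵀ with hMdef
  have hMu : IsUnit M := hLHL u hu
  have hMdet : IsUnit M.det := (Matrix.isUnit_iff_isUnit_det M).mp hMu
  have hLdet : IsUnit (L u).det := (Matrix.isUnit_iff_isUnit_det (L u)).mp (hLinv u hu)
  have hLTdet : IsUnit ((L u)ᵀ).det := Matrix.isUnit_det_transpose (L u) hLdet
  -- derivative of L H
  have hLH : HasDerivAt (fun w => L w * H w) (S u * L u * H u + L u * H' u) u :=
    (hL u hu).mul (hH u hu)
  -- L H' = (Lᵀ)⁻¹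
  have hLH' : L u * H' u = ((L u)ᵀ)⁻¹ := (Matrix.inv_eq_left_inv (hH' u hu)).symm
  -- M⁻¹ (L H) = (Lᵀ)⁻¹
  have hMLH : M⁻¹ * (L u * H u) = ((L u)ᵀ)⁻¹ := by
    have : M * ((L u)ᵀ)⁻¹ = L u * H u := by
      rw [hMdef, Matrix.mul_nonsing_inv_cancel_right _ _ hLTdet]
    rw [← this, Matrix.nonsing_inv_mul_cancel_left _ _ hMdet]
  -- derivative of M
  have hM : HasDerivAt (fun w => L w * H w * (L w)ᵀ) (S u * M + 1 + M * S u) u := by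
    have h := hLH.mul (hasDerivAt_transpose_aux (hL u hu))
    refine h.congr_deriv (Eq.symm ?_)
    rw [Matrix.transpose_mul, hSsym u hu, Matrix.add_mul, hH' u hu, hMdef]
    noncomm_ring
  -- derivative of M⁻¹
  have hMinv : HasDerivAt (fun w => (L w * H w * (L w)ᵀ)⁻¹)
      (-(M⁻¹ * S u + M⁻¹ * M⁻¹ + S u * M⁻¹)) u := by
    have h := hasDerivAt_matrix_inv_aux hM hMu
    have hc : ∀ B : Matrix (Fin n) (Fin n) ℝ, M⁻¹ * (M * B) = B :=
      fun B => Matrix.nonsing_inv_mul_cancel_left M B hMdet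
    convert h using 2
    rw [← hMdef]
    simp [Matrix.mul_add, Matrix.add_mul, Matrix.mul_assoc,
      Matrix.mul_nonsing_inv M hMdet, hc]
  constructor
  · have h := (hSachs u hu).add hMinv
    refine h.congr_deriv (Eq.symm ?_)
    rw [hMdef] at *
    rw [← neg_add]
    congr 1
    noncomm_ring
  · convert hLH using 1
    rw [Matrix.add_mul, hMLH, hLH', Matrix.mul_assoc]
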